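/- Suppose f(t) = exp(i⟨t,γ⟩ + Σ_{u∈U} λ_u (e^{i⟨t,u⟩} − 1)) for all t ∈ ℝ^d, where U ⊂ ℝ^d is countable with 0 ∉ U, λ_u ∈ ℂ with Σ_u |λ_u| < ∞, and γ ∈ ℝ^d. Then for any unit vector e ∈ ℝ^d, lim_{T→∞} Ln f(T e)/(iT) = ⟨γ, e⟩. Consequently, γ is uniquely determined by f. -/

import Mathlib

open scoped RealInnerProductSpace
open Filter Complex Topology

private lemma exp_sub_one_norm_le (r : ℝ) :
    ‖Complex.exp (Complex.I * (r : ℂ)) - 1‖ ≤ 2 := by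
  have h1 : ‖Complex.exp (Complex.I * (r : ℂ))‖ = 1 := by
    rw [mul_comm]
    simp [Complex.norm_exp_ofReal_mul_I]
  calc ‖Complex.exp (Complex.I * (r : ℂ)) - 1‖
      ≤ ‖Complex.exp (Complex.I * (r : ℂ))‖ + ‖(1 : ℂ)‖ := norm_sub_le _ _
    _ ≤ 2 := by rw [h1]; norm_num

private lemma tendsto_aux {d : ℕ} (γ : EuclideanSpace ℝ (Fin d))
    (u : ℕ → EuclideanSpace ℝ (Fin d)) (lam : ℕ → ℂ) (hlam : Summable fun k => ‖lam k‖)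
    (L : EuclideanSpace ℝ (Fin d) → ℂ)
    (hLdef : ∀ t, L t = Complex.I * ((⟪t, γ⟫ : ℝ) : ℂ)
        + ∑' k, lam k * (Complex.exp (Complex.I * ((⟪t, u k⟫ : ℝ) : ℂ)) - 1))
    (e : EuclideanSpace ℝ (Fin d)) :
    Tendsto (fun T : ℝ => L (T • e) / (Complex.I * (T : ℂ))) atTop
      (𝓝 (((⟪γ, e⟫ : ℝ) : ℂ))) := by
  set c : ℂ := ((⟪γ, e⟫ : ℝ) : ℂ) with hc
  set C : ℝ := ∑' k, 2 * ‖lam k‖ with hCdef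
  have hsum2 : Summable fun k => 2 * ‖lam k‖ := hlam.mul_left 2
  have hSb : ∀ t : EuclideanSpace ℝ (Fin d),
      ‖∑' k, lam k * (Complex.exp (Complex.I * ((⟪t, u k⟫ : ℝ) : ℂ)) - 1)‖ ≤ C := by
    intro t
    refine tsum_of_norm_bounded hsum2.hasSum fun k => ?_
    rw [norm_mul, mul_comm]
    exact mul_le_mul_of_nonneg_right (exp_sub_one_norm_le _) (norm_nonneg _)
  rw [← tendsto_sub_nhds_zero_iff]
  apply squeeze_zero_norm' (a := fun T : ℝ => C / T)
  · filter_upwards [eventually_ge_atTop (1 : ℝ)] with T hT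
    have hT0 : (0 : ℝ) < T := lt_of_lt_of_le one_pos hT
    have hTne : (T : ℂ) ≠ 0 := by exact_mod_cast hT0.ne'
    have hITne : Complex.I * (T : ℂ) ≠ 0 := mul_ne_zero Complex.I_ne_zero hTne
    have hinner : ((⟪T • e, γ⟫ : ℝ) : ℂ) = (T : ℂ) * c := by
      rw [real_inner_smul_left, real_inner_comm]
      push_cast
      ring
    have hLT : L (T • e) = Complex.I * (T : ℂ) * c
        + ∑' k, lam k * (Complex.exp (Complex.I * ((⟪T • e, u k⟫ : ℝ) : ℂ)) - 1) := by
      rw [hLdef, hinner, ← mul_assoc]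
    rw [hLT]
    have : (Complex.I * (T : ℂ) * c
        + ∑' k, lam k * (Complex.exp (Complex.I * ((⟪T • e, u k⟫ : ℝ) : ℂ)) - 1))
        / (Complex.I * (T : ℂ)) - c
        = (∑' k, lam k * (Complex.exp (Complex.I * ((⟪T • e, u k⟫ : ℝ) : ℂ)) - 1))
          / (Complex.I * (T : ℂ)) := by
      field_simp
      ring
    rw [this, norm_div]
    have hnormIT : ‖Complex.I * (T : ℂ)‖ = T := by
      rw [norm_mul, Complex.norm_I, one_mul, Complex.norm_real, Real.norm_eq_abs,
        abs_of_pos hT0]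
    rw [hnormIT]
    have := hSb (T • e)
    gcongr
  · exact tendsto_const_nhds.div_atTop tendsto_id

/-- If `f = exp(L)` with `L t = i⟨t,γ⟩ + Σ_u λ_u (e^{i⟨t,u⟩} − 1)` (absolutely
convergent, `0 ∉ U`), then for any unit vector `e`,
`L(Te)/(iT) → ⟨γ,e⟩` as `T → ∞`; consequently `γ` is uniquely determined. -/
theorem stmt6 (d : ℕ) (hd : 1 ≤ d) (γ : EuclideanSpace ℝ (Fin d))
    (u : ℕ → EuclideanSpace ℝ (Fin d)) (hu : Function.Injective u) (hu0 : ∀ k, u k ≠ 0)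
    (lam : ℕ → ℂ) (hlam : Summable fun k => ‖lam k‖)
    (L f : EuclideanSpace ℝ (Fin d) → ℂ)
    (hLdef : ∀ t, L t = Complex.I * ((⟪t, γ⟫ : ℝ) : ℂ)
        + ∑' k, lam k * (Complex.exp (Complex.I * ((⟪t, u k⟫ : ℝ) : ℂ)) - 1))
    (hf : ∀ t, f t = Complex.exp (L t)) :
    (∀ e : EuclideanSpace ℝ (Fin d), ‖e‖ = 1 →
      Filter.Tendsto (fun T : ℝ => L (T • e) / (Complex.I * (T : ℂ)))
        Filter.atTop (nhds (((⟪γ, e⟫ : ℝ) : ℂ)))) ∧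
    (∀ (γ₂ : EuclideanSpace ℝ (Fin d)) (u₂ : ℕ → EuclideanSpace ℝ (Fin d)) (lam₂ : ℕ → ℂ),
      Function.Injective u₂ → (∀ k, u₂ k ≠ 0) → Summable (fun k => ‖lam₂ k‖) →
      (∀ t, f t = Complex.exp (Complex.I * ((⟪t, γ₂⟫ : ℝ) : ℂ)
          + ∑' k, lam₂ k * (Complex.exp (Complex.I * ((⟪t, u₂ k⟫ : ℝ) : ℂ)) - 1))) →
      γ₂ = γ) := by
  constructor
  · intro e _
    exact tendsto_aux γ u lam hlam L hLdef e
  · intro γ₂ u₂ lam₂ hu₂ hu₂0 hlam₂ hf₂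
    -- L₂ : the second representation
    set L₂ : EuclideanSpace ℝ (Fin d) → ℂ := fun t => Complex.I * ((⟪t, γ₂⟫ : ℝ) : ℂ)
        + ∑' k, lam₂ k * (Complex.exp (Complex.I * ((⟪t, u₂ k⟫ : ℝ) : ℂ)) - 1) with hL₂
    -- continuity helper
    have cont_of : ∀ (δ : EuclideanSpace ℝ (Fin d)) (v : ℕ → EuclideanSpace ℝ (Fin d))
        (μ : ℕ → ℂ), Summable (fun k => ‖μ k‖) →
        Continuous (fun t : EuclideanSpace ℝ (Fin d) => Complex.I * ((⟪t, δ⟫ : ℝ) : ℂ)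
          + ∑' k, μ k * (Complex.exp (Complex.I * ((⟪t, v k⟫ : ℝ) : ℂ)) - 1)) := by
      intro δ v μ hμ
      apply Continuous.add
      · exact continuous_const.mul (Complex.continuous_ofReal.comp
          (continuous_id.inner continuous_const))
      · apply continuous_tsum (u := fun k => 2 * ‖μ k‖)
        · intro k
          exact continuous_const.mul ((Complex.continuous_exp.comp
            (continuous_const.mul (Complex.continuous_ofReal.comp
              (continuous_id.inner continuous_const)))).sub continuous_const)
        · exact hμ.mul_left 2
        · intro k t
          rw [norm_mul, mul_comm]
          exact mul_le_mul_of_nonneg_right (exp_sub_one_norm_le _) (norm_nonneg _)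
    have hLcont : Continuous L := by
      have : L = fun t => Complex.I * ((⟪t, γ⟫ : ℝ) : ℂ)
          + ∑' k, lam k * (Complex.exp (Complex.I * ((⟪t, u k⟫ : ℝ) : ℂ)) - 1) :=
        funext hLdef
      rw [this]; exact cont_of γ u lam hlam
    have hL₂cont : Continuous L₂ := cont_of γ₂ u₂ lam₂ hlam₂
    -- g = L - L₂ takes values in 2πiℤ
    set g : EuclideanSpace ℝ (Fin d) → ℂ := fun t => L t - L₂ t with hg
    have hgcont : Continuous g := hLcont.sub hL₂cont
    have hexp : ∀ t, Complex.exp (g t) = 1 := by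
      intro t
      rw [Complex.exp_sub, (hf t).symm.trans (hf₂ t)]
      exact div_self (Complex.exp_ne_zero _)
    have hval : ∀ t, ∃ n : ℤ, g t = n * (2 * Real.pi * Complex.I) := by
      intro t; exact (Complex.exp_eq_one_iff).mp (hexp t)
    have hg0 : g 0 = 0 := by
      simp only [hg, hLdef, hL₂]
      simp [inner_zero_left]
    -- clopen argument
    have hset : {t : EuclideanSpace ℝ (Fin d) | g t = 0} = Set.univ := by
      apply IsClopen.eq_univ
      · constructor
        · exact isClosed_eq hgcont continuous_const
        · have heq : {t : EuclideanSpace ℝ (Fin d) | g t = 0} = g ⁻¹' (Metric.ball 0 1) := by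
            ext t
            simp only [Set.mem_setOf_eq, Set.mem_preimage, Metric.mem_ball, dist_zero_right]
            constructor
            · intro h; rw [h]; simpa using one_pos
            · intro h
              obtain ⟨n, hn⟩ := hval t
              rcases eq_or_ne n 0 with h0 | h0
              · rw [hn, h0]; simp
              · exfalso
                rw [hn] at h
                have : (1 : ℝ) ≤ ‖(n : ℂ) * (2 * Real.pi * Complex.I)‖ := by
                  rw [norm_mul, norm_mul, norm_mul, Complex.norm_I, mul_one,
                    Complex.norm_intCast, Complex.norm_ofNat, Complex.norm_real,
                    Real.norm_eq_abs, abs_of_pos Real.pi_pos]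
                  have h1 : (1 : ℝ) ≤ |(n : ℝ)| := by
                    rw [← Int.cast_abs]
                    exact_mod_cast Int.one_le_abs h0
                  nlinarith [Real.pi_gt_three]
                linarith
          rw [heq]
          exact hgcont.isOpen_preimage _ Metric.isOpen_ball
      · exact ⟨0, hg0⟩
    have hLL₂ : ∀ t, L t = L₂ t := by
      intro t
      have : g t = 0 := by
        have := hset ▸ Set.mem_univ t
        exact (Set.eq_univ_iff_forall.mp hset t)
      simpa [hg, sub_eq_zero] using this
    -- tendsto with second data
    have hT₂ : ∀ e : EuclideanSpace ℝ (Fin d),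
        Tendsto (fun T : ℝ => L (T • e) / (Complex.I * (T : ℂ))) atTop
          (𝓝 (((⟪γ₂, e⟫ : ℝ) : ℂ))) :=
      fun e => tendsto_aux γ₂ u₂ lam₂ hlam₂ L (fun t => (hLL₂ t).trans rfl) e
    have hinner_eq : ∀ e : EuclideanSpace ℝ (Fin d), (⟪γ, e⟫ : ℝ) = ⟪γ₂, e⟫ := by
      intro e
      have h1 := tendsto_aux γ u lam hlam L hLdef e
      have h2 := hT₂ e
      exact_mod_cast tendsto_nhds_unique h1 h2
    -- conclude
    have : ∀ v : EuclideanSpace ℝ (Fin d), (⟪γ₂ - γ, v⟫ : ℝ) = 0 := by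
      intro v
      rw [inner_sub_left, ← hinner_eq v, sub_self]
    have h0 : γ₂ - γ = 0 := by
      have := this (γ₂ - γ)
      rwa [inner_self_eq_zero] at this
    exact sub_eq_zero.mp h0
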